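/- arXiv:1604.05694 — 8 statements merged into one kernel-verified Lean document; each statement's English description precedes it below -/
import Mathlib

section
/- Let C ⊆ ℝⁿ be a nonempty closed set and x a point where the projection P_C(x) onto C is single-valued. Then the function q(x) = (1/2) dist(x, C)² is differentiable at x with ∇q(x) = x − P_C(x). -/
open Metric Filter Topology

/-- If `C` is a nonempty closed set and the projection of `x` onto `C` is single
valued, equal to `p`, then `q(y) = (1/2) dist(y, C)²` has gradient `x - p` at `x`. -/
theorem gradient_half_sq_dist {n : ℕ} (C : Set (EuclideanSpace ℝ (Fin n)))
    (hC : IsClosed C) (hne : C.Nonempty)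
    (x p : EuclideanSpace ℝ (Fin n))
    (hp : p ∈ C ∧ ∀ y ∈ C, ‖x - p‖ ≤ ‖x - y‖)
    (huniq : ∀ p' ∈ C, (∀ y ∈ C, ‖x - p'‖ ≤ ‖x - y‖) → p' = p) :
    HasGradientAt (fun y => (1 / 2 : ℝ) * (infDist y C) ^ 2) (x - p) x := by
  classical
  obtain ⟨hpC, hpmin⟩ := hp
  have hPex : ∀ y : EuclideanSpace ℝ (Fin n), ∃ z ∈ C, infDist y C = dist y z :=
    fun y => hC.exists_infDist_eq_dist hne y
  choose P PC Pd using hPex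
  -- basic facts
  have hle : ∀ (y z : EuclideanSpace ℝ (Fin n)), z ∈ C → infDist y C ≤ ‖y - z‖ := by
    intro y z hz
    rw [← dist_eq_norm]
    exact infDist_le_dist_of_mem hz
  have hPd' : ∀ y : EuclideanSpace ℝ (Fin n), infDist y C = ‖y - P y‖ := by
    intro y; rw [Pd y, dist_eq_norm]
  have hxval : infDist x C = ‖x - p‖ := by
    refine le_antisymm (hle x p hpC) ?_
    rw [hPd' x]
    exact hpmin (P x) (PC x)
  -- continuity of the projection at x
  have hcont : Tendsto P (𝓝 x) (𝓝 p) := by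
    apply tendsto_of_subseq_tendsto
    intro u hu
    have hb : ∀ᶠ k in atTop, P (u k) ∈ C ∩ closedBall x (2 * ‖x - p‖ + 2) := by
      have h1 : ∀ᶠ k in atTop, u k ∈ closedBall x 1 :=
        hu.eventually (Metric.closedBall_mem_nhds x one_pos)
      filter_upwards [h1] with k hk
      rw [mem_closedBall] at hk
      refine ⟨PC (u k), ?_⟩
      rw [mem_closedBall]
      have h2 : dist (u k) (P (u k)) ≤ dist (u k) p := by
        rw [← Pd (u k)]; exact infDist_le_dist_of_mem hpC
      have h3 : dist (u k) p ≤ dist (u k) x + dist x p := dist_triangle _ _ _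
      have h4 : dist x p = ‖x - p‖ := dist_eq_norm _ _
      calc dist (P (u k)) x ≤ dist (P (u k)) (u k) + dist (u k) x := dist_triangle _ _ _
        _ = dist (u k) (P (u k)) + dist (u k) x := by rw [dist_comm]
        _ ≤ 2 * ‖x - p‖ + 2 := by
            have h5 : dist x (u k) = dist (u k) x := dist_comm _ _
            have h6 : (0:ℝ) ≤ ‖x - p‖ := norm_nonneg _
            linarith
    have hcomp : IsCompact (C ∩ closedBall x (2 * ‖x - p‖ + 2)) :=
      (isCompact_closedBall x _).inter_left hC
    obtain ⟨q, hqmem, φ, hφ, hqt⟩ := hcomp.tendsto_subseq' hb.frequently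
    have huφ : Tendsto (fun k => u (φ k)) atTop (𝓝 x) :=
      hu.comp hφ.tendsto_atTop
    have hq : q = p := by
      refine huniq q hqmem.1 ?_
      intro z hz
      have lim1 : Tendsto (fun k => dist (u (φ k)) (P (u (φ k)))) atTop (𝓝 (dist x q)) :=
        huφ.dist hqt
      have lim2 : Tendsto (fun k => dist (u (φ k)) z) atTop (𝓝 (dist x z)) :=
        huφ.dist tendsto_const_nhds
      have hdq : dist x q ≤ dist x z := by
        refine le_of_tendsto_of_tendsto' lim1 lim2 fun k => ?_
        rw [← Pd]
        exact infDist_le_dist_of_mem hz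
      rw [dist_eq_norm, dist_eq_norm] at hdq
      exact hdq
    exact ⟨φ, hq ▸ hqt⟩
  -- main estimate
  rw [hasGradientAt_iff_isLittleO, Asymptotics.isLittleO_iff]
  intro c hc
  have h1 : ∀ᶠ y in 𝓝 x, ‖P y - p‖ ≤ c / 2 := by
    have : ∀ᶠ z in 𝓝 p, ‖z - p‖ ≤ c / 2 := by
      have := Metric.closedBall_mem_nhds p (by positivity : (0:ℝ) < c / 2)
      filter_upwards [this] with z hz
      rw [mem_closedBall, dist_eq_norm] at hz
      exact hz
    exact hcont.eventually this
  have h2 : ∀ᶠ y in 𝓝 x, ‖y - x‖ ≤ c := by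
    have := Metric.closedBall_mem_nhds x hc
    filter_upwards [this] with z hz
    rw [mem_closedBall, dist_eq_norm] at hz
    exact hz
  filter_upwards [h1, h2] with y hy1 hy2
  set a : ℝ := inner ℝ (x - p) (y - x) with ha
  have hgx : (1 / 2 : ℝ) * (infDist x C) ^ 2 = (1 / 2 : ℝ) * ‖x - p‖ ^ 2 := by
    rw [hxval]
  -- upper bound
  have hup : (1 / 2 : ℝ) * (infDist y C) ^ 2 - (1 / 2 : ℝ) * (infDist x C) ^ 2 - a
      ≤ (1 / 2 : ℝ) * ‖y - x‖ ^ 2 := by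
    have hb1 : (infDist y C) ^ 2 ≤ ‖y - p‖ ^ 2 := by
      have := hle y p hpC
      have h0 : 0 ≤ infDist y C := infDist_nonneg
      nlinarith
    have hexp : ‖y - p‖ ^ 2 = ‖x - p‖ ^ 2 + 2 * a + ‖y - x‖ ^ 2 := by
      have : y - p = (x - p) + (y - x) := by abel
      rw [this, norm_add_sq_real]
    rw [hgx]
    nlinarith
  -- lower bound
  have hlow : -(‖P y - p‖ * ‖y - x‖)
      ≤ (1 / 2 : ℝ) * (infDist y C) ^ 2 - (1 / 2 : ℝ) * (infDist x C) ^ 2 - a := by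
    have hb2 : (infDist x C) ^ 2 ≤ ‖x - P y‖ ^ 2 := by
      have := hle x (P y) (PC y)
      have h0 : 0 ≤ infDist x C := infDist_nonneg
      nlinarith
    have hexp : ‖y - P y‖ ^ 2 =
        ‖x - P y‖ ^ 2 + 2 * (inner ℝ (x - P y) (y - x) : ℝ) + ‖y - x‖ ^ 2 := by
      have : y - P y = (x - P y) + (y - x) := by abel
      rw [this, norm_add_sq_real]
    have hia : (inner ℝ (x - P y) (y - x) : ℝ) = a + (inner ℝ (p - P y) (y - x) : ℝ) := by
      rw [ha, ← inner_add_left]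
      congr 1
      abel
    have hib : -(‖p - P y‖ * ‖y - x‖) ≤ (inner ℝ (p - P y) (y - x) : ℝ) := by
      have := abs_real_inner_le_norm (p - P y) (y - x)
      have := neg_abs_le (inner ℝ (p - P y) (y - x) : ℝ)
      linarith
    have hnorm : ‖p - P y‖ = ‖P y - p‖ := by rw [norm_sub_rev]
    have hgy : (infDist y C) ^ 2 = ‖y - P y‖ ^ 2 := by rw [hPd' y]
    rw [hnorm] at hib
    nlinarith
  have hd : 0 ≤ ‖y - x‖ := norm_nonneg _
  rw [Real.norm_eq_abs, abs_le]
  constructor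
  · have : ‖P y - p‖ * ‖y - x‖ ≤ (c / 2) * ‖y - x‖ :=
      mul_le_mul_of_nonneg_right hy1 hd
    nlinarith
  · have : (1 / 2 : ℝ) * ‖y - x‖ ^ 2 ≤ (1 / 2 : ℝ) * (c * ‖y - x‖) := by nlinarith
    nlinarith
end

section
/- Let f : ℝⁿ → ℝ be closed convex, C ⊆ ℝⁿ a closed convex set, and ρ > 0. Then x* minimizes F(x) = f(x) + (ρ/2) dist(x, C)² if and only if x* is a fixed point of the map x ↦ prox_{ρ⁻¹ f}(P_C(x)). -/
open Metric RealInnerProductSpace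

/-- Fixed points of the proximal distance map: for closed convex `f`, a closed
convex set `C` with projection map `P`, and `ρ > 0`, with `T` the proximal map
`T y = prox_{ρ⁻¹ f}(y)` (the unique minimizer of `z ↦ f z + (ρ/2)‖z - y‖²`),
a point `x✶` minimizes `F(x) = f x + (ρ/2) dist(x, C)²` if and only if
`x✶` is a fixed point of `x ↦ T (P x)`. -/
theorem proximal_distance_fixed_point {n : ℕ}
    (f : EuclideanSpace ℝ (Fin n) → ℝ)
    (hf : ConvexOn ℝ Set.univ f) (hfc : Continuous f)
    (C : Set (EuclideanSpace ℝ (Fin n)))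
    (hC : IsClosed C) (hCc : Convex ℝ C) (hne : C.Nonempty)
    (ρ : ℝ) (hρ : 0 < ρ)
    (P : EuclideanSpace ℝ (Fin n) → EuclideanSpace ℝ (Fin n))
    (hP : ∀ x, P x ∈ C ∧ ∀ y ∈ C, ‖x - P x‖ ≤ ‖x - y‖)
    (T : EuclideanSpace ℝ (Fin n) → EuclideanSpace ℝ (Fin n))
    (hT : ∀ y z, f (T y) + (ρ / 2) * ‖T y - y‖ ^ 2 ≤ f z + (ρ / 2) * ‖z - y‖ ^ 2)
    (hTuniq : ∀ y z, f z + (ρ / 2) * ‖z - y‖ ^ 2 ≤ f (T y) + (ρ / 2) * ‖T y - y‖ ^ 2 → z = T y)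
    (xstar : EuclideanSpace ℝ (Fin n)) :
    (∀ x, f xstar + (ρ / 2) * (infDist xstar C) ^ 2 ≤ f x + (ρ / 2) * (infDist x C) ^ 2)
      ↔ T (P xstar) = xstar := by
  -- helper: lower bounds on infDist
  have le_inf : ∀ (x : EuclideanSpace ℝ (Fin n)) (b : ℝ),
      (∀ y ∈ C, b ≤ dist x y) → b ≤ infDist x C := by
    intro x b h
    by_contra hlt
    push_neg at hlt
    obtain ⟨y, hy, hdy⟩ := (infDist_lt_iff hne).1 hlt
    exact absurd (h y hy) (not_le.2 hdy)
  -- infDist equals distance to the projection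
  have hdist : ∀ x, infDist x C = ‖x - P x‖ := by
    intro x
    refine le_antisymm ?_ ?_
    · have := infDist_le_dist_of_mem (x := x) (hP x).1
      rwa [dist_eq_norm] at this
    · refine le_inf x _ fun y hy => ?_
      rw [dist_eq_norm]
      exact (hP x).2 y hy
  -- projection variational inequality
  have hvar : ∀ x, ∀ z ∈ C, ⟪x - P x, z - P x⟫ ≤ 0 := by
    intro x z hz
    by_contra h
    push_neg at h
    set a := x - P x with ha
    set b := z - P x with hb
    have hbne : b ≠ 0 := by
      intro h0
      rw [h0, inner_zero_right] at h
      exact lt_irrefl 0 h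
    have hbpos : 0 < ‖b‖ ^ 2 := by
      have : 0 < ‖b‖ := norm_pos_iff.2 hbne
      positivity
    set t : ℝ := min 1 (⟪a, b⟫ / ‖b‖ ^ 2) with htdef
    have ht0 : 0 < t := lt_min one_pos (div_pos h hbpos)
    have ht1 : t ≤ 1 := min_le_left _ _
    have htb : t * ‖b‖ ^ 2 ≤ ⟪a, b⟫ := by
      have : t ≤ ⟪a, b⟫ / ‖b‖ ^ 2 := min_le_right _ _
      calc t * ‖b‖ ^ 2 ≤ (⟪a, b⟫ / ‖b‖ ^ 2) * ‖b‖ ^ 2 :=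
            mul_le_mul_of_nonneg_right this hbpos.le
        _ = ⟪a, b⟫ := by field_simp
    have hmem : P x + t • b ∈ C := by
      have h1 : (1 - t) • P x + t • z ∈ C :=
        hCc (hP x).1 hz (by linarith) ht0.le (by ring)
      have h2 : P x + t • b = (1 - t) • P x + t • z := by
        rw [hb]; module
      rwa [h2]
    have hle : ‖a‖ ≤ ‖x - (P x + t • b)‖ := (hP x).2 _ hmem
    have hexp : x - (P x + t • b) = a - t • b := by rw [ha]; module
    rw [hexp] at hle
    have hsq : ‖a‖ ^ 2 ≤ ‖a - t • b‖ ^ 2 :=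
      pow_le_pow_left₀ (norm_nonneg a) hle 2
    have hnorm : ‖a - t • b‖ ^ 2 = ‖a‖ ^ 2 - 2 * (t * ⟪a, b⟫) + t ^ 2 * ‖b‖ ^ 2 := by
      rw [norm_sub_sq_real, real_inner_smul_right, norm_smul, Real.norm_eq_abs,
        mul_pow, sq_abs]
    nlinarith [mul_pos ht0 h]
  -- halfspace lower bound on squared distance
  have hkey : ∀ x y : EuclideanSpace ℝ (Fin n),
      ‖x - P x‖ ^ 2 + 2 * ⟪y - x, x - P x⟫ ≤ infDist y C ^ 2 := by
    intro x y
    set v := x - P x with hv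
    have hw : ∀ z ∈ C, ‖v‖ ^ 2 + 2 * ⟪y - x, v⟫ ≤ ‖y - z‖ ^ 2 := by
      intro z hz
      have h1 : ⟪v, z - P x⟫ ≤ 0 := hvar x z hz
      have h2 : ‖y - z - v‖ ^ 2 = ‖y - z‖ ^ 2 - 2 * ⟪y - z, v⟫ + ‖v‖ ^ 2 :=
        norm_sub_sq_real _ _
      have h3 : y - z = (y - x) + v - (z - P x) := by rw [hv]; module
      have h4 : ⟪y - z, v⟫ = ⟪y - x, v⟫ + ‖v‖ ^ 2 - ⟪z - P x, v⟫ := by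
        rw [h3, inner_sub_left, inner_add_left, real_inner_self_eq_norm_sq]
      rw [real_inner_comm v (z - P x)] at h4
      nlinarith [sq_nonneg ‖y - z - v‖]
    rcases le_or_gt (‖v‖ ^ 2 + 2 * ⟪y - x, v⟫) 0 with hle | hpos
    · exact hle.trans (sq_nonneg _)
    · have hr : Real.sqrt (‖v‖ ^ 2 + 2 * ⟪y - x, v⟫) ≤ infDist y C := by
        refine le_inf y _ fun z hz => ?_
        rw [dist_eq_norm]
        calc Real.sqrt (‖v‖ ^ 2 + 2 * ⟪y - x, v⟫) ≤ Real.sqrt (‖y - z‖ ^ 2) :=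
              Real.sqrt_le_sqrt (hw z hz)
          _ = ‖y - z‖ := Real.sqrt_sq (norm_nonneg _)
      calc ‖v‖ ^ 2 + 2 * ⟪y - x, v⟫
          = Real.sqrt (‖v‖ ^ 2 + 2 * ⟪y - x, v⟫) ^ 2 := (Real.sq_sqrt hpos.le).symm
        _ ≤ infDist y C ^ 2 := pow_le_pow_left₀ (Real.sqrt_nonneg _) hr 2
  constructor
  · -- minimizer → fixed point
    intro hmin
    refine (hTuniq (P xstar) xstar ?_).symm
    have h1 := hmin (T (P xstar))
    rw [hdist xstar] at h1
    have h2 : infDist (T (P xstar)) C ≤ ‖T (P xstar) - P xstar‖ := by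
      have := infDist_le_dist_of_mem (x := T (P xstar)) (hP xstar).1
      rwa [dist_eq_norm] at this
    have h3 : infDist (T (P xstar)) C ^ 2 ≤ ‖T (P xstar) - P xstar‖ ^ 2 :=
      pow_le_pow_left₀ infDist_nonneg h2 2
    have h4 : (ρ / 2) * infDist (T (P xstar)) C ^ 2
        ≤ (ρ / 2) * ‖T (P xstar) - P xstar‖ ^ 2 :=
      mul_le_mul_of_nonneg_left h3 (by linarith)
    linarith
  · -- fixed point → minimizer
    intro hfix x
    set v := xstar - P xstar with hv
    set s := ⟪x - xstar, v⟫ with hs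
    have hstep : ∀ t : ℝ, 0 < t → t ≤ 1 →
        f xstar ≤ f x + ρ * s + ρ / 2 * t * ‖x - xstar‖ ^ 2 := by
      intro t ht0 ht1
      have h1 := hT (P xstar) (xstar + t • (x - xstar))
      rw [hfix] at h1
      have hconv : f (xstar + t • (x - xstar)) ≤ (1 - t) * f xstar + t * f x := by
        have h2 : xstar + t • (x - xstar) = (1 - t) • xstar + t • x := by module
        rw [h2]
        exact hf.2 (Set.mem_univ _) (Set.mem_univ _) (by linarith) ht0.le (by ring)
      have hcomm : ⟪v, x - xstar⟫ = s := real_inner_comm _ _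
      have hnorm : ‖xstar + t • (x - xstar) - P xstar‖ ^ 2
          = ‖v‖ ^ 2 + 2 * (t * s) + t ^ 2 * ‖x - xstar‖ ^ 2 := by
        have h3 : xstar + t • (x - xstar) - P xstar = v + t • (x - xstar) := by
          rw [hv]; module
        rw [h3, norm_add_sq_real, real_inner_smul_right, norm_smul, Real.norm_eq_abs,
          mul_pow, sq_abs, hcomm]
      have h4 : t * f xstar ≤ t * (f x + ρ * s + ρ / 2 * t * ‖x - xstar‖ ^ 2) := by
        nlinarith
      exact le_of_mul_le_mul_left h4 ht0
    have hlim : f xstar ≤ f x + ρ * s := by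
      refine le_of_forall_pos_le_add fun ε hε => ?_
      set M2 := ‖x - xstar‖ ^ 2 with hM2def
      have hM2 : 0 ≤ M2 := sq_nonneg _
      have hden : 0 < ρ / 2 * M2 + 1 := by positivity
      set t := min 1 (ε / (ρ / 2 * M2 + 1)) with htdef
      have ht0 : 0 < t := lt_min one_pos (div_pos hε hden)
      have ht1 : t ≤ 1 := min_le_left _ _
      have h5 := hstep t ht0 ht1
      have h6 : t ≤ ε / (ρ / 2 * M2 + 1) := min_le_right _ _
      have h7 : t * (ρ / 2 * M2 + 1) ≤ ε := by
        rw [← le_div_iff₀ hden]; exact h6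
      have hbound : ρ / 2 * t * M2 ≤ ε := by nlinarith
      linarith
    have hkx := hkey xstar x
    rw [hdist xstar]
    have h8 : (ρ / 2) * (‖v‖ ^ 2 + 2 * s) ≤ (ρ / 2) * infDist x C ^ 2 :=
      mul_le_mul_of_nonneg_left hkx (by linarith)
    linarith
end

section
/- Let M = α I + (1−α) N with N : ℝⁿ → ℝⁿ nonexpansive and α ∈ (0,1). Then M and N have the same fixed point sets, and if M has at least one fixed point, the iteration x_{k+1} = M(x_k) converges to a fixed point of M from any starting point (Krasnosel'skii–Mann theorem). -/
open Filter Topology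

lemma km_key {E : Type*} [NormedAddCommGroup E] [InnerProductSpace ℝ E]
    (t : ℝ) (a b : E) :
    ‖t • a + (1 - t) • b‖ ^ 2
      = t * ‖a‖ ^ 2 + (1 - t) * ‖b‖ ^ 2 - t * (1 - t) * ‖a - b‖ ^ 2 := by
  have h1 := norm_add_sq_real (t • a) ((1 - t) • b)
  have h2 := norm_sub_sq_real a b
  have h3 : (inner ℝ (t • a) ((1 - t) • b) : ℝ)
      = t * ((1 - t) * (inner ℝ a b : ℝ)) := by
    rw [real_inner_smul_left, real_inner_smul_right]
  have h4 : ‖t • a‖ ^ 2 = t ^ 2 * ‖a‖ ^ 2 := by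
    rw [norm_smul, mul_pow, Real.norm_eq_abs, sq_abs]
  have h5 : ‖(1 - t) • b‖ ^ 2 = (1 - t) ^ 2 * ‖b‖ ^ 2 := by
    rw [norm_smul, mul_pow, Real.norm_eq_abs, sq_abs]
  rw [h1, h3, h4, h5, h2]; ring

/-- Krasnosel'skii–Mann: if `M = α I + (1-α) N` with `N` nonexpansive and
`α ∈ (0,1)`, then `M` and `N` share fixed points, and if `M` has a fixed
point then the iteration `x_{k+1} = M(x_k)` converges to a fixed point of `M`
from any starting point. -/
theorem krasnoselskii_mann {n : ℕ}
    (M N : EuclideanSpace ℝ (Fin n) → EuclideanSpace ℝ (Fin n))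
    (α : ℝ) (hα : α ∈ Set.Ioo (0 : ℝ) 1)
    (hN : ∀ x y, ‖N x - N y‖ ≤ ‖x - y‖)
    (hM : ∀ x, M x = α • x + (1 - α) • N x) :
    (∀ x, M x = x ↔ N x = x) ∧
      ((∃ x, M x = x) →
        ∀ x0, ∃ xstar, M xstar = xstar ∧
          Tendsto (fun k => M^[k] x0) atTop (𝓝 xstar)) := by
  obtain ⟨hα0, hα1⟩ := hα
  have h1α : (0 : ℝ) < 1 - α := by linarith
  -- fixed point sets coincide
  have fix_iff : ∀ x, M x = x ↔ N x = x := by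
    intro x
    constructor
    · intro h
      have hz : (1 - α) • (N x - x) = 0 := by
        have := hM x
        rw [h] at this
        have : (1 - α) • (N x - x) = x - (α • x + (1 - α) • N x) + (1 - α) • (N x - x) := by
          rw [← this]; simp
        rw [this]; module
      have := (smul_eq_zero.mp hz).resolve_left (ne_of_gt h1α)
      have : N x = x := by rwa [sub_eq_zero] at this
      exact this
    · intro h
      rw [hM x, h]; module
  refine ⟨fix_iff, ?_⟩
  rintro ⟨p, hp⟩ x0
  set f : ℕ → EuclideanSpace ℝ (Fin n) := fun k => M^[k] x0 with hf
  have hstep : ∀ k, f (k + 1) = M (f k) := fun k => Function.iterate_succ_apply' M k x0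
  -- key inequality relative to any fixed point q
  have key : ∀ q, M q = q → ∀ x,
      ‖M x - q‖ ^ 2 ≤ ‖x - q‖ ^ 2 - α * (1 - α) * ‖x - N x‖ ^ 2 := by
    intro q hq x
    have hNq : N q = q := (fix_iff q).mp hq
    have hdiff : M x - q = α • (x - q) + (1 - α) • (N x - q) := by
      rw [hM x]; module
    have hNle : ‖N x - q‖ ≤ ‖x - q‖ := by
      have := hN x q; rwa [hNq] at this
    have hab : (x - q) - (N x - q) = x - N x := by abel
    rw [hdiff, km_key, hab]
    have h0 : (0:ℝ) ≤ ‖N x - q‖ := norm_nonneg _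
    have hsq : ‖N x - q‖ ^ 2 ≤ ‖x - q‖ ^ 2 :=
      pow_le_pow_left₀ h0 hNle 2
    nlinarith [hsq, h1α.le]
  -- Fejér monotonicity
  have fejer : ∀ q, M q = q → ∀ k, ‖f (k + 1) - q‖ ≤ ‖f k - q‖ := by
    intro q hq k
    have h := key q hq (f k)
    rw [← hstep k] at h
    have hnn : (0:ℝ) ≤ α * (1 - α) * ‖f k - N (f k)‖ ^ 2 := by positivity
    nlinarith [norm_nonneg (f (k + 1) - q), norm_nonneg (f k - q)]
  have fejer_anti : ∀ q, M q = q → Antitone fun k => ‖f k - q‖ := by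
    intro q hq
    exact antitone_nat_of_succ_le (fejer q hq)
  -- D k = ‖f k - p‖² converges, hence asymptotic regularity
  set D : ℕ → ℝ := fun k => ‖f k - p‖ ^ 2 with hD
  have hDanti : Antitone D := by
    intro i j hij
    exact pow_le_pow_left₀ (norm_nonneg _) (fejer_anti p hp hij) 2
  have hDbdd : BddBelow (Set.range D) := ⟨0, by rintro _ ⟨k, rfl⟩; positivity⟩
  have hDconv : Tendsto D atTop (𝓝 (⨅ k, D k)) := tendsto_atTop_ciInf hDanti hDbdd
  have hDconv' : Tendsto (fun k => D (k + 1)) atTop (𝓝 (⨅ k, D k)) :=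
    hDconv.comp (tendsto_add_atTop_nat 1)
  have hdiff0 : Tendsto (fun k => D k - D (k + 1)) atTop (𝓝 0) := by
    have := hDconv.sub hDconv'
    simpa using this
  have hreg_sq : Tendsto (fun k => ‖f k - N (f k)‖ ^ 2) atTop (𝓝 0) := by
    have hle : ∀ k, α * (1 - α) * ‖f k - N (f k)‖ ^ 2 ≤ D k - D (k + 1) := by
      intro k
      have h := key p hp (f k)
      rw [← hstep k] at h
      simp only [hD]
      linarith
    have hsq : Tendsto (fun k => α * (1 - α) * ‖f k - N (f k)‖ ^ 2) atTop (𝓝 0) := by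
      refine tendsto_of_tendsto_of_tendsto_of_le_of_le tendsto_const_nhds hdiff0
        (fun k => by positivity) hle
    have hc : (0:ℝ) < α * (1 - α) := by positivity
    have := hsq.const_mul (α * (1 - α))⁻¹
    simp only [mul_zero] at this
    convert this using 2 with k
    field_simp
  -- N is continuous
  have hNcont : Continuous N := by
    have : LipschitzWith 1 N := by
      refine LipschitzWith.of_dist_le_mul fun x y => ?_
      rw [dist_eq_norm, dist_eq_norm]
      simpa using hN x y
    exact this.continuous
  -- bounded orbit: extract convergent subsequence
  have hball : ∀ k, f k ∈ Metric.closedBall p ‖x0 - p‖ := by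
    intro k
    rw [Metric.mem_closedBall, dist_eq_norm]
    calc ‖f k - p‖ ≤ ‖f 0 - p‖ := fejer_anti p hp (Nat.zero_le k)
      _ = ‖x0 - p‖ := by rw [show f 0 = x0 from rfl]
  obtain ⟨xstar, -, φ, hφ, hconv⟩ :=
    (isCompact_closedBall p ‖x0 - p‖).tendsto_subseq hball
  -- the limit point is a fixed point
  have hgcont : Continuous fun x => ‖x - N x‖ ^ 2 :=
    ((continuous_id.sub hNcont).norm).pow 2
  have hlim1 : Tendsto (fun j => ‖f (φ j) - N (f (φ j))‖ ^ 2) atTop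
      (𝓝 (‖xstar - N xstar‖ ^ 2)) := (hgcont.tendsto xstar).comp hconv
  have hlim2 : Tendsto (fun j => ‖f (φ j) - N (f (φ j))‖ ^ 2) atTop (𝓝 0) :=
    hreg_sq.comp hφ.tendsto_atTop
  have hx0 : ‖xstar - N xstar‖ ^ 2 = 0 := tendsto_nhds_unique hlim1 hlim2
  have hNx : N xstar = xstar := by
    have : xstar - N xstar = 0 := by
      have := pow_eq_zero_iff (n := 2) (by norm_num) |>.mp hx0
      exact norm_eq_zero.mp this
    rw [sub_eq_zero] at this
    exact this.symm
  have hMx : M xstar = xstar := (fix_iff xstar).mpr hNx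
  refine ⟨xstar, hMx, ?_⟩
  -- the full sequence converges to xstar
  set u : ℕ → ℝ := fun k => ‖f k - xstar‖ with hu
  have huanti : Antitone u := fejer_anti xstar hMx
  have hubdd : BddBelow (Set.range u) := ⟨0, by rintro _ ⟨k, rfl⟩; positivity⟩
  have huconv : Tendsto u atTop (𝓝 (⨅ k, u k)) := tendsto_atTop_ciInf huanti hubdd
  have husub : Tendsto (fun j => u (φ j)) atTop (𝓝 0) := by
    have := tendsto_iff_norm_sub_tendsto_zero.mp hconv
    simpa [hu, Function.comp] using this
  have husub' : Tendsto (fun j => u (φ j)) atTop (𝓝 (⨅ k, u k)) :=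
    huconv.comp hφ.tendsto_atTop
  have hinf : (⨅ k, u k) = 0 := tendsto_nhds_unique husub' husub
  rw [hinf] at huconv
  exact tendsto_iff_norm_sub_tendsto_zero.mpr huconv
end

section
/- Let f : ℝⁿ → ℝ be continuous and coercive, let q(x) = (1/(2m)) Σᵢ dist(x, Cᵢ)² for closed sets Cᵢ with nonempty intersection C = ∩ᵢ Cᵢ, and for each ρ > 0 let x_ρ minimize f + ρq. Then any cluster point of x_ρ as ρ → ∞ lies in C and minimizes f over C. -/
open Metric Filter Topology

/-- Penalty method convergence: let `f` be continuous and coercive, let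
`q(x) = (1/(2m)) ∑ᵢ dist(x, Cᵢ)²` for closed sets `Cᵢ` with nonempty
intersection, and for each `ρ > 0` let `xρ` minimize `f + ρ q`. Then any
cluster point of `ρ ↦ x ρ` as `ρ → ∞` lies in the intersection and minimizes
`f` over the intersection. -/
theorem penalty_method_cluster_points {n m : ℕ} (hm : 0 < m)
    (f : EuclideanSpace ℝ (Fin n) → ℝ)
    (hfc : Continuous f)
    (hcoercive : Tendsto f (cocompact _) atTop)
    (C : Fin m → Set (EuclideanSpace ℝ (Fin n)))
    (hclosed : ∀ i, IsClosed (C i))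
    (hne : (⋂ i, C i).Nonempty)
    (q : EuclideanSpace ℝ (Fin n) → ℝ)
    (hq : ∀ x, q x = (1 / (2 * (m : ℝ))) * ∑ i, (infDist x (C i)) ^ 2)
    (xρ : ℝ → EuclideanSpace ℝ (Fin n))
    (hmin : ∀ ρ > (0 : ℝ), ∀ x, f (xρ ρ) + ρ * q (xρ ρ) ≤ f x + ρ * q x)
    (xbar : EuclideanSpace ℝ (Fin n))
    (hcluster : MapClusterPt xbar atTop xρ) :
    xbar ∈ ⋂ i, C i ∧ ∀ y ∈ ⋂ i, C i, f xbar ≤ f y := by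
  obtain ⟨y0, hy0⟩ := hne
  obtain ⟨z, hz⟩ := hfc.exists_forall_le hcoercive
  have hm' : (0 : ℝ) < m := by exact_mod_cast hm
  have hfreq := mapClusterPt_iff_frequently.mp hcluster
  have hqc : Continuous q := by
    have h1 : Continuous fun x => (1 / (2 * (m : ℝ))) * ∑ i, (infDist x (C i)) ^ 2 :=
      continuous_const.mul (continuous_finset_sum _ fun i _ =>
        (continuous_infDist_pt (C i)).pow 2)
    have : q = fun x => (1 / (2 * (m : ℝ))) * ∑ i, (infDist x (C i)) ^ 2 := funext hq
    rw [this]; exact h1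
  have hqnn : ∀ x, 0 ≤ q x := by
    intro x
    rw [hq]
    have : 0 ≤ ∑ i, (infDist x (C i)) ^ 2 :=
      Finset.sum_nonneg fun i _ => sq_nonneg _
    positivity
  have hq0 : ∀ y ∈ ⋂ i, C i, q y = 0 := by
    intro y hy
    rw [hq]
    have h0 : ∀ i, infDist y (C i) = 0 := fun i =>
      infDist_zero_of_mem (Set.mem_iInter.mp hy i)
    simp [h0]
  -- f (xρ ρ) ≤ f y for any y ∈ ⋂ C i and ρ > 0
  have hfle : ∀ ρ > (0 : ℝ), ∀ y ∈ ⋂ i, C i, f (xρ ρ) ≤ f y := by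
    intro ρ hρ y hy
    have h1 := hmin ρ hρ y
    rw [hq0 y hy] at h1
    nlinarith [hqnn (xρ ρ)]
  -- q (xρ ρ) ≤ (f y0 - f z)/ρ
  have hqb : ∀ ρ > (0 : ℝ), q (xρ ρ) ≤ (f y0 - f z) / ρ := by
    intro ρ hρ
    have h1 := hmin ρ hρ y0
    rw [hq0 y0 hy0] at h1
    have h2 := hz (xρ ρ)
    rw [le_div_iff₀ hρ]
    nlinarith
  -- q xbar = 0
  have hqxbar : q xbar = 0 := by
    by_contra h
    have hpos : 0 < q xbar := lt_of_le_of_ne (hqnn xbar) (Ne.symm h)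
    set ε := q xbar with hε
    have hU : q ⁻¹' Set.Ioi (ε / 2) ∈ 𝓝 xbar :=
      (hqc.continuousAt).preimage_mem_nhds (Ioi_mem_nhds (by linarith))
    have hev : ∀ᶠ ρ in atTop, q (xρ ρ) ≤ ε / 2 := by
      have hρ0 : ∀ᶠ ρ : ℝ in atTop, max 1 (2 * (f y0 - f z) / ε) < ρ :=
        eventually_gt_atTop _
      filter_upwards [hρ0] with ρ hρ
      have hρ1 : (0 : ℝ) < ρ := lt_of_lt_of_le zero_lt_one (le_of_lt (lt_of_le_of_lt (le_max_left _ _) hρ))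
      calc q (xρ ρ) ≤ (f y0 - f z) / ρ := hqb ρ hρ1
        _ ≤ ε / 2 := by
            rw [div_le_div_iff₀ hρ1 (by norm_num : (0:ℝ) < 2)]
            have h2 : 2 * (f y0 - f z) / ε ≤ ρ := le_of_lt (lt_of_le_of_lt (le_max_right _ _) hρ)
            rw [div_le_iff₀ hpos] at h2
            nlinarith
    have := (hfreq _ hU).and_eventually hev
    obtain ⟨ρ, hρ1, hρ2⟩ := this.exists
    simp only [Set.mem_preimage, Set.mem_Ioi] at hρ1
    linarith
  -- membership
  have hdist0 : ∀ i, infDist xbar (C i) = 0 := by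
    have hsum : ∑ i, (infDist xbar (C i)) ^ 2 = 0 := by
      have := hq xbar
      rw [hqxbar] at this
      have hc : (0:ℝ) < 1 / (2 * (m : ℝ)) := by positivity
      field_simp at this
      linarith [this]
    intro i
    have h2 := (Finset.sum_eq_zero_iff_of_nonneg
      (fun j (_ : j ∈ Finset.univ) => sq_nonneg (infDist xbar (C j)))).mp hsum i (Finset.mem_univ i)
    exact pow_eq_zero_iff (n := 2) (by norm_num) |>.mp h2
  have hmem : xbar ∈ ⋂ i, C i := by
    rw [Set.mem_iInter]
    intro i
    have hnei : (C i).Nonempty := ⟨y0, Set.mem_iInter.mp hy0 i⟩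
    exact ((hclosed i).mem_iff_infDist_zero hnei).mpr (hdist0 i)
  refine ⟨hmem, ?_⟩
  intro y hy
  by_contra h
  push_neg at h
  have hU : f ⁻¹' Set.Ioi (f y) ∈ 𝓝 xbar :=
    (hfc.continuousAt).preimage_mem_nhds (Ioi_mem_nhds h)
  have := (hfreq _ hU).and_eventually (eventually_gt_atTop (0:ℝ))
  obtain ⟨ρ, hρ1, hρ2⟩ := this.exists
  simp only [Set.mem_preimage, Set.mem_Ioi] at hρ1
  exact absurd (hfle ρ hρ2 y hy) (not_le.mpr hρ1)
end

section
/- Let y ∈ ℝⁿ with at least one positive component, and let S = {x ∈ ℝⁿ : ‖x‖ = 1, x ≥ 0}. Then the projection of y onto S is y₊/‖y₊‖, where y₊ denotes the componentwise positive part of y. -/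
open scoped RealInnerProductSpace


/-- Projection onto the intersection of the unit sphere and the nonnegative
orthant: if some component of `y` is positive, the projection is `y₊ / ‖y₊‖`. -/
theorem sphere_orthant_projection_pos {n : ℕ}
    (y : EuclideanSpace ℝ (Fin n)) (hpos : ∃ i, 0 < y i)
    (yplus : EuclideanSpace ℝ (Fin n)) (hyplus : ∀ i, yplus i = max (y i) 0) :
    (‖(‖yplus‖⁻¹ • yplus : EuclideanSpace ℝ (Fin n))‖ = 1 ∧
        ∀ i, 0 ≤ (‖yplus‖⁻¹ • yplus : EuclideanSpace ℝ (Fin n)) i) ∧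
      ∀ x : EuclideanSpace ℝ (Fin n), ‖x‖ = 1 → (∀ i, 0 ≤ x i) →
        ‖y - ‖yplus‖⁻¹ • yplus‖ ≤ ‖y - x‖ := by
  obtain ⟨i₀, hi₀⟩ := hpos
  have hne : yplus ≠ 0 := by
    intro h
    have : yplus i₀ = 0 := by rw [h]; rfl
    rw [hyplus i₀] at this
    have := le_max_left (y i₀) 0
    linarith
  have hnorm : 0 < ‖yplus‖ := norm_pos_iff.mpr hne
  have hunit : ‖(‖yplus‖⁻¹ • yplus : EuclideanSpace ℝ (Fin n))‖ = 1 := by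
    rw [norm_smul, norm_inv, norm_norm, inv_mul_cancel₀ hnorm.ne']
  have hinner_yp : (inner ℝ y yplus : ℝ) = ‖yplus‖ ^ 2 := by
    rw [← real_inner_self_eq_norm_sq]
    simp only [PiLp.inner_apply, RCLike.inner_apply, conj_trivial]
    refine Finset.sum_congr rfl fun i _ => ?_
    rw [hyplus i]
    rcases le_or_gt (y i) 0 with h | h
    · simp [max_eq_right h]
    · rw [max_eq_left h.le]
  refine ⟨⟨hunit, fun i => ?_⟩, fun x hx hx0 => ?_⟩
  · have : (‖yplus‖⁻¹ • yplus : EuclideanSpace ℝ (Fin n)) i = ‖yplus‖⁻¹ * yplus i := rfl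
    rw [this, hyplus i]
    exact mul_nonneg (inv_nonneg.mpr hnorm.le) (le_max_right _ _)
  · -- compare inner products
    have hgoal_sq : ‖y - ‖yplus‖⁻¹ • yplus‖ ^ 2 ≤ ‖y - x‖ ^ 2 := by
      rw [norm_sub_sq_real, norm_sub_sq_real, hunit, hx]
      have h1 : (inner ℝ y x : ℝ) ≤ ‖yplus‖ := by
        have h2 : (inner ℝ y x : ℝ) ≤ (inner ℝ yplus x : ℝ) := by
          simp only [PiLp.inner_apply, RCLike.inner_apply, conj_trivial]
          refine Finset.sum_le_sum fun i _ => ?_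
          exact mul_le_mul_of_nonneg_left (by rw [hyplus i]; exact le_max_left _ _) (hx0 i)
        have h3 : (inner ℝ yplus x : ℝ) ≤ ‖yplus‖ * ‖x‖ := real_inner_le_norm _ _
        rw [hx, mul_one] at h3
        linarith
      have h4 : (inner ℝ y (‖yplus‖⁻¹ • yplus : EuclideanSpace ℝ (Fin n)) : ℝ) = ‖yplus‖ := by
        rw [real_inner_smul_right, hinner_yp]
        field_simp
      rw [h4]
      nlinarith
    exact (pow_le_pow_iff_left₀ (norm_nonneg _) (norm_nonneg _) two_ne_zero).mp hgoal_sq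
end

section
/- Let y ∈ ℝⁿ have all components negative, let i be an index attaining the maximum (least negative) component, and S = {x ∈ ℝⁿ : ‖x‖ = 1, x ≥ 0}. Then the standard unit vector e_i minimizes ‖y − x‖ over x ∈ S. -/
/-- Projection onto the intersection of the unit sphere and the nonnegative
orthant: if all components of `y` are negative and `i` attains the least
negative component, then the standard unit vector `e_i` minimizes `‖y - x‖`
over the constraint set. -/
theorem sphere_orthant_projection_neg {n : ℕ}
    (y : EuclideanSpace ℝ (Fin n)) (hneg : ∀ j, y j < 0)
    (i : Fin n) (hi : ∀ j, y j ≤ y i)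
    (e : EuclideanSpace ℝ (Fin n)) (he : ∀ j, e j = if j = i then 1 else 0) :
    (‖e‖ = 1 ∧ ∀ j, 0 ≤ e j) ∧
      ∀ x : EuclideanSpace ℝ (Fin n), ‖x‖ = 1 → (∀ j, 0 ≤ x j) →
        ‖y - e‖ ≤ ‖y - x‖ := by
  have hinner_e : (inner ℝ y e : ℝ) = y i := by
    simp only [PiLp.inner_apply, RCLike.inner_apply, conj_trivial]
    rw [Finset.sum_eq_single i]
    · simp [he]
    · intro j _ hj; simp [he, hj]
    · intro h; exact absurd (Finset.mem_univ i) h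
  have he1 : ‖e‖ = 1 := by
    rw [EuclideanSpace.norm_eq]
    rw [Finset.sum_eq_single i]
    · simp [he]
    · intro j _ hj; simp [he, hj]
    · intro h; exact absurd (Finset.mem_univ i) h
  refine ⟨⟨he1, fun j => by rw [he]; split <;> norm_num⟩, fun x hx hx0 => ?_⟩
  -- sum of x is at least 1
  have hsum : (1:ℝ) ≤ ∑ j, x j := by
    have hs0 : (0:ℝ) ≤ ∑ j, x j := Finset.sum_nonneg fun j _ => hx0 j
    have hsq : ∑ j, (x j)^2 ≤ (∑ j, x j)^2 := by
      rw [sq, Finset.sum_mul]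
      refine Finset.sum_le_sum fun j _ => ?_
      rw [sq]
      exact mul_le_mul_of_nonneg_left
        (Finset.single_le_sum (fun k _ => hx0 k) (Finset.mem_univ j)) (hx0 j)
    have hnx : ∑ j, (x j)^2 = 1 := by
      have h : Real.sqrt (∑ j, ‖x j‖^2) = 1 := by rw [← EuclideanSpace.norm_eq]; exact hx
      have h2 : ∑ j, ‖x j‖^2 = 1 := by
        nlinarith [Real.sq_sqrt (Finset.sum_nonneg (fun j _ => sq_nonneg ‖x j‖) :
          (0:ℝ) ≤ ∑ j, ‖x j‖^2)]
      simpa [Real.norm_eq_abs, sq_abs] using h2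
    nlinarith
  have hinner_x : (inner ℝ y x : ℝ) ≤ y i := by
    have h1 : (inner ℝ y x : ℝ) = ∑ j, y j * x j := by
      simp [PiLp.inner_apply, RCLike.inner_apply, conj_trivial, mul_comm]
    have h2 : ∑ j, y j * x j ≤ ∑ j, y i * x j :=
      Finset.sum_le_sum fun j _ => mul_le_mul_of_nonneg_right (hi j) (hx0 j)
    have h3 : ∑ j, y i * x j = y i * ∑ j, x j := by rw [Finset.mul_sum]
    have h4 : y i * ∑ j, x j ≤ y i * 1 :=
      mul_le_mul_of_nonpos_left hsum (le_of_lt (hneg i))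
    rw [h1]; linarith
  have hsq : ‖y - e‖^2 ≤ ‖y - x‖^2 := by
    rw [norm_sub_sq_real, norm_sub_sq_real, he1, hx, hinner_e]
    linarith
  have h0e := norm_nonneg (y - e)
  have h0x := norm_nonneg (y - x)
  nlinarith
end

section
/- The 5×5 Horn matrix M with entries M_{ii} = 1 and off-diagonal pattern M = [[1,−1,1,1,−1],[−1,1,−1,1,1],[1,−1,1,−1,1],[1,1,−1,1,−1],[−1,1,1,−1,1]] is copositive: xᵗMx ≥ 0 for all x ≥ 0. -/
open Matrix

/-- The 5×5 Horn matrix is copositive. -/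
theorem horn_matrix_copositive
    (M : Matrix (Fin 5) (Fin 5) ℝ)
    (hM : M = !![1, -1, 1, 1, -1;
                 -1, 1, -1, 1, 1;
                 1, -1, 1, -1, 1;
                 1, 1, -1, 1, -1;
                 -1, 1, 1, -1, 1]) :
    ∀ x : Fin 5 → ℝ, (∀ i, 0 ≤ x i) → 0 ≤ x ⬝ᵥ M *ᵥ x := by
  subst hM
  intro x hx
  have h0 := hx 0; have h1 := hx 1; have h2 := hx 2; have h3 := hx 3; have h4 := hx 4
  simp [dotProduct, mulVec, Fin.sum_univ_five, Matrix.cons_val_zero, Matrix.cons_val_one, Matrix.vecHead, Matrix.vecTail]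
  rcases le_total (x 3) (x 4) with h | h
  · nlinarith [sq_nonneg (x 0 - x 1 + x 2 + x 3 - x 4), mul_nonneg h1 h3,
      mul_nonneg h2 (sub_nonneg.2 h)]
  · nlinarith [sq_nonneg (x 0 - x 1 + x 2 - x 3 + x 4), mul_nonneg h1 h4,
      mul_nonneg h0 (sub_nonneg.2 h)]
end

section
/- For the 5×5 Horn matrix M, the variational index μ(M) = min{xᵗMx : ‖x‖ = 1, x ≥ 0} equals 0, attained at x = (1/√2)(1,1,0,0,0)ᵗ. -/
open Matrix

/-- The variational index `μ(M) = min {xᵗMx : ‖x‖ = 1, x ≥ 0}` of the 5×5 Horn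
matrix equals 0 and is attained at `x = (1/√2)(1,1,0,0,0)ᵗ`. -/
theorem horn_matrix_variational_index
    (M : Matrix (Fin 5) (Fin 5) ℝ)
    (hM : M = !![1, -1, 1, 1, -1;
                 -1, 1, -1, 1, 1;
                 1, -1, 1, -1, 1;
                 1, 1, -1, 1, -1;
                 -1, 1, 1, -1, 1])
    (x0 : Fin 5 → ℝ) (hx0 : x0 = (Real.sqrt 2)⁻¹ • ![1, 1, 0, 0, 0]) :
    (∑ i, (x0 i) ^ 2 = 1) ∧ (∀ i, 0 ≤ x0 i) ∧ x0 ⬝ᵥ M *ᵥ x0 = 0 ∧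
      ∀ x : Fin 5 → ℝ, (∑ i, (x i) ^ 2 = 1) → (∀ i, 0 ≤ x i) →
        0 ≤ x ⬝ᵥ M *ᵥ x := by
  have hs : (Real.sqrt 2)⁻¹ ^ 2 = 1 / 2 := by
    rw [inv_pow, Real.sq_sqrt (by norm_num)]; norm_num
  have hsnn : 0 ≤ (Real.sqrt 2)⁻¹ := by positivity
  subst hM hx0
  refine ⟨?_, ?_, ?_, ?_⟩
  · simp [Fin.sum_univ_five]
    linarith [hs]
  · intro i
    fin_cases i <;> simp <;> positivity
  · simp [dotProduct, mulVec, Fin.sum_univ_five]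
  · intro x hn hpos
    have h4 := hpos 3
    have h5 := hpos 4
    simp only [Fin.sum_univ_five] at hn
    simp [dotProduct, mulVec, Fin.sum_univ_five, Matrix.vecHead, Matrix.vecTail]
    rcases le_total (x 3) (x 4) with h | h
    · nlinarith [sq_nonneg (x 0 - x 1 + x 2 + x 3 - x 4),
        mul_nonneg (hpos 1) (hpos 3), mul_nonneg (hpos 2) (sub_nonneg.2 h)]
    · nlinarith [sq_nonneg (x 0 - x 1 + x 2 - x 3 + x 4),
        mul_nonneg (hpos 1) (hpos 4), mul_nonneg (hpos 0) (sub_nonneg.2 h)]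
end
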